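/- Let w ≥ 2 be an integer and let A = {0, 1, w}. For every integer h ≥ w, the h-fold sumset satisfies |hA| = hw + 1 - (w-1)(w-2)/2. -/

import Mathlib

open Pointwise

/-- The h-fold sumset of a finite set of integers. -/
def hfold (A : Finset ℤ) : ℕ → Finset ℤ
  | 0 => {0}
  | n + 1 => A + hfold A n

lemma mem_hfold (w : ℤ) (h : ℕ) (x : ℤ) :
    x ∈ hfold {0, 1, w} h ↔ ∃ i j : ℕ, i + j ≤ h ∧ x = (i : ℤ) + (j : ℤ) * w := by
  induction h generalizing x with
  | zero =>
    simp only [hfold, Finset.mem_singleton]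
    constructor
    · rintro rfl; exact ⟨0, 0, by simp, by simp⟩
    · rintro ⟨i, j, hij, rfl⟩
      have hi : i = 0 := by omega
      have hj : j = 0 := by omega
      subst hi; subst hj; simp
  | succ n ih =>
    show x ∈ ({0, 1, w} : Finset ℤ) + hfold {0, 1, w} n ↔ _
    rw [Finset.mem_add]
    constructor
    · rintro ⟨a, ha, y, hy, rfl⟩
      obtain ⟨i, j, hij, rfl⟩ := (ih y).mp hy
      simp only [Finset.mem_insert, Finset.mem_singleton] at ha
      rcases ha with rfl | rfl | rfl
      · exact ⟨i, j, by omega, by ring⟩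
      · exact ⟨i + 1, j, by omega, by push_cast; ring⟩
      · exact ⟨i, j + 1, by omega, by push_cast; ring⟩
    · rintro ⟨i, j, hij, rfl⟩
      rcases le_or_gt (i + j) n with hle | hlt
      · exact ⟨0, by simp, _, (ih _).mpr ⟨i, j, hle, rfl⟩, by ring⟩
      · rcases Nat.eq_zero_or_pos i with rfl | hi
        · have hj : 1 ≤ j := by omega
          refine ⟨w, by simp, (0 : ℤ) + ((j - 1 : ℕ) : ℤ) * w,
            (ih _).mpr ⟨0, j - 1, by omega, rfl⟩, ?_⟩
          push_cast [Nat.cast_sub hj]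
          ring
        · refine ⟨1, by simp, ((i - 1 : ℕ) : ℤ) + (j : ℤ) * w,
            (ih _).mpr ⟨i - 1, j, by omega, rfl⟩, ?_⟩
          push_cast [Nat.cast_sub hi]
          ring

theorem stmt_9 (w h : ℕ) (hw : 2 ≤ w) (hh : w ≤ h) :
    ((hfold {0, 1, (w : ℤ)} h).card : ℚ) =
      (h : ℚ) * w + 1 - ((w : ℚ) - 1) * ((w : ℚ) - 2) / 2 := by
  set T : Finset ℕ :=
    (Finset.range w).biUnion (fun r => (Finset.range (h + 1 - r)).image (fun q => q * w + r))
    with hT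
  have key : hfold {0, 1, (w : ℤ)} h = T.image (fun n : ℕ => (n : ℤ)) := by
    ext x
    rw [mem_hfold]
    simp only [hT, Finset.mem_image, Finset.mem_biUnion, Finset.mem_range]
    constructor
    · rintro ⟨i, j, hij, rfl⟩
      refine ⟨i / w * w + i % w + j * w, ⟨i % w, Nat.mod_lt _ (by omega), i / w + j, ?_, by ring⟩, ?_⟩
      · have h1 : i / w * w + i % w = i := by rw [mul_comm]; exact Nat.div_add_mod i w
        have h2 : i / w ≤ i / w * w := Nat.le_mul_of_pos_right _ (by omega)
        omega
      · have h1 : i / w * w + i % w = i := by rw [mul_comm]; exact Nat.div_add_mod i w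
        have h2 := congrArg (fun n : ℕ => (n : ℤ)) h1
        push_cast at h2 ⊢
        linarith
    · rintro ⟨n, ⟨r, hr, q, hq, rfl⟩, rfl⟩
      exact ⟨r, q, by omega, by push_cast; ring⟩
  have hcard : (hfold {0, 1, (w : ℤ)} h).card = T.card := by
    rw [key, Finset.card_image_of_injective _ (fun a b hab => Int.natCast_inj.mp hab)]
  have hTcard : T.card = ∑ r ∈ Finset.range w, (h + 1 - r) := by
    rw [hT, Finset.card_biUnion]
    · refine Finset.sum_congr rfl fun r hr => ?_
      rw [Finset.card_image_of_injective, Finset.card_range]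
      intro a b hab
      simp only at hab
      exact Nat.eq_of_mul_eq_mul_right (by omega : 0 < w) (by omega : a * w = b * w)
    · intro r₁ h₁ r₂ h₂ hne
      simp only [Finset.mem_coe, Finset.mem_range] at h₁ h₂
      rw [Function.onFun, Finset.disjoint_left]
      rintro n hn₁ hn₂
      simp only [Finset.mem_image, Finset.mem_range] at hn₁ hn₂
      obtain ⟨q₁, -, rfl⟩ := hn₁
      obtain ⟨q₂, -, heq⟩ := hn₂
      have e1 : (q₂ * w + r₂) % w = r₂ := by
        rw [mul_comm, Nat.mul_add_mod]; exact Nat.mod_eq_of_lt h₂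
      have e2 : (q₁ * w + r₁) % w = r₁ := by
        rw [mul_comm, Nat.mul_add_mod]; exact Nat.mod_eq_of_lt h₁
      rw [heq, e2] at e1
      exact hne e1
  rw [hcard, hTcard]
  have hsum : ((∑ r ∈ Finset.range w, (h + 1 - r) : ℕ) : ℚ) =
      ∑ r ∈ Finset.range w, ((h : ℚ) + 1 - (r : ℚ)) := by
    rw [Nat.cast_sum]
    refine Finset.sum_congr rfl fun r hr => ?_
    simp only [Finset.mem_range] at hr
    rw [Nat.cast_sub (by omega)]
    push_cast
    ring
  rw [hsum, Finset.sum_sub_distrib, Finset.sum_const, Finset.card_range]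
  have gauss : ((∑ r ∈ Finset.range w, (r : ℚ))) = w * (w - 1) / 2 := by
    have h0 := congrArg (fun n : ℕ => (n : ℚ)) (Finset.sum_range_id_mul_two w)
    push_cast [Nat.cast_sub (by omega : 1 ≤ w)] at h0
    linarith
  rw [gauss, nsmul_eq_mul]
  ring
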